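/- Let (ε_n) be a sequence of positive reals and ζ : ℕ × ℂ⁺ → [0,∞). Suppose there are constants α₀, α₁, α₂, α₃, α₄, α₅, α₆ > 0, c > 0 and C₁ > 0 such that: (i) ζ(n,z) ≤ C₁·|z|^{α₁}/(ε_n^{α₀}·Im(z)^{α₁+α₂}) for all n ∈ ℕ and all z ∈ ℂ⁺; and (ii) for every B > 0 there exists C_B > 0 such that ζ(n,z) ≤ C_B·ε_n·|z|^{α₃}/Im(z)^{α₃+α₄} for all n and all z with 0 < Im(z) ≤ B satisfying ε_n·|z|^{α₅}/Im(z)^{α₅+α₆} ≤ c. Then there exists α > 0 (one may take α = max(α₅(α₀+1)+α₁, α₆(α₀+1)+α₂, α₃, α₄)) such that for every B > 0 there exists C > 0 with ζ(n,z) ≤ C·ε_n·|z|^α/Im(z)^{2α} for all n ∈ ℕ and all z ∈ ℂ with 0 < Im(z) ≤ B; that is, ζ(n,z) ≤ O_z(ε_n). -/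

import Mathlib

open MeasureTheory ProbabilityTheory Filter
open scoped NNReal

lemma aux_pow_cmp (a y B t p q : ℝ) (hy : 0 < y) (hya : y ≤ a) (hyB : y ≤ B)
    (hpt : p ≤ t) (hqt : q ≤ t) :
    a ^ p / y ^ (p + q) ≤ B ^ (t - q) * a ^ t / y ^ (2 * t) := by
  have ha : 0 < a := hy.trans_le hya
  have hB : 0 < B := hy.trans_le hyB
  have hden : y ^ (2 * t) = y ^ (p + q) * (y ^ (t - p) * y ^ (t - q)) := by
    rw [← Real.rpow_add hy, ← Real.rpow_add hy]
    congr 1; ring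
  have h1 : y ^ (t - p) ≤ a ^ (t - p) :=
    Real.rpow_le_rpow hy.le hya (by linarith)
  have h2 : y ^ (t - q) ≤ B ^ (t - q) :=
    Real.rpow_le_rpow hy.le hyB (by linarith)
  have hap : a ^ p * a ^ (t - p) = a ^ t := by
    rw [← Real.rpow_add ha]; congr 1; ring
  have hnum : a ^ p * (y ^ (t - p) * y ^ (t - q)) ≤ B ^ (t - q) * a ^ t := by
    have hmm : y ^ (t - p) * y ^ (t - q) ≤ a ^ (t - p) * B ^ (t - q) :=
      mul_le_mul h1 h2 (by positivity) (by positivity)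
    calc a ^ p * (y ^ (t - p) * y ^ (t - q)) ≤ a ^ p * (a ^ (t - p) * B ^ (t - q)) :=
          mul_le_mul_of_nonneg_left hmm (by positivity)
      _ = B ^ (t - q) * (a ^ p * a ^ (t - p)) := by ring
      _ = B ^ (t - q) * a ^ t := by rw [hap]
  rw [div_le_div_iff₀ (by positivity) (by positivity), hden]
  have hfin := mul_le_mul_of_nonneg_right hnum (Real.rpow_nonneg hy.le (p + q))
  nlinarith [hfin]

theorem stmt_0 (ε : ℕ → ℝ) (hε : ∀ n, 0 < ε n)
    (ζ : ℕ → ℂ → ℝ) (hζ : ∀ (n : ℕ) (z : ℂ), 0 < z.im → 0 ≤ ζ n z)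
    (α₀ α₁ α₂ α₃ α₄ α₅ α₆ : ℝ)
    (hα₀ : 0 < α₀) (hα₁ : 0 < α₁) (hα₂ : 0 < α₂) (hα₃ : 0 < α₃)
    (hα₄ : 0 < α₄) (hα₅ : 0 < α₅) (hα₆ : 0 < α₆)
    (c C₁ : ℝ) (hc : 0 < c) (hC₁ : 0 < C₁)
    (h1 : ∀ (n : ℕ) (z : ℂ), 0 < z.im →
      ζ n z ≤ C₁ * ‖z‖ ^ α₁ / (ε n ^ α₀ * z.im ^ (α₁ + α₂)))
    (h2 : ∀ B > (0:ℝ), ∃ C > (0:ℝ), ∀ (n : ℕ) (z : ℂ), 0 < z.im → z.im ≤ B →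
      ε n * ‖z‖ ^ α₅ / z.im ^ (α₅ + α₆) ≤ c →
      ζ n z ≤ C * ε n * ‖z‖ ^ α₃ / z.im ^ (α₃ + α₄)) :
    ∃ α > (0:ℝ),
      α = max (max (α₅ * (α₀ + 1) + α₁) (α₆ * (α₀ + 1) + α₂)) (max α₃ α₄) ∧
      ∀ B > (0:ℝ), ∃ C > (0:ℝ), ∀ (n : ℕ) (z : ℂ), 0 < z.im → z.im ≤ B →
        ζ n z ≤ C * ε n * ‖z‖ ^ α / z.im ^ (2 * α) := by
  set p : ℝ := α₅ * (α₀ + 1) + α₁ with hpdef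
  set q : ℝ := α₆ * (α₀ + 1) + α₂ with hqdef
  set α : ℝ := max (max p q) (max α₃ α₄) with hαdef
  have hα₃α : α₃ ≤ α := le_trans (le_max_left _ _) (le_max_right _ _)
  have hα₄α : α₄ ≤ α := le_trans (le_max_right _ _) (le_max_right _ _)
  have hpα : p ≤ α := le_trans (le_max_left _ _) (le_max_left _ _)
  have hqα : q ≤ α := le_trans (le_max_right _ _) (le_max_left _ _)
  have hαpos : 0 < α := lt_of_lt_of_le hα₃ hα₃α
  refine ⟨α, hαpos, rfl, ?_⟩
  intro B hB
  obtain ⟨C₂, hC₂, h2'⟩ := h2 B hB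
  set K : ℝ := c ^ (α₀ + 1) with hKdef
  have hK : 0 < K := Real.rpow_pos_of_pos hc _
  refine ⟨max (C₂ * B ^ (α - α₄)) (C₁ / K * B ^ (α - q)),
    lt_max_of_lt_left (by positivity), ?_⟩
  intro n z hy hyB
  set a : ℝ := ‖z‖ with hadef
  set y : ℝ := z.im with hydef
  have hya : y ≤ a := le_trans (le_abs_self _) (Complex.abs_im_le_norm z)
  have ha : 0 < a := hy.trans_le hya
  have hεn := hε n
  by_cases hcase : ε n * a ^ α₅ / y ^ (α₅ + α₆) ≤ c
  · -- small regime: use h2'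
    have key := aux_pow_cmp a y B α α₃ α₄ hy hya hyB hα₃α hα₄α
    calc ζ n z ≤ C₂ * ε n * a ^ α₃ / y ^ (α₃ + α₄) := h2' n z hy hyB hcase
      _ = C₂ * ε n * (a ^ α₃ / y ^ (α₃ + α₄)) := by ring
      _ ≤ C₂ * ε n * (B ^ (α - α₄) * a ^ α / y ^ (2 * α)) :=
          mul_le_mul_of_nonneg_left key (by positivity)
      _ = C₂ * B ^ (α - α₄) * ε n * a ^ α / y ^ (2 * α) := by ring
      _ ≤ max (C₂ * B ^ (α - α₄)) (C₁ / K * B ^ (α - q)) * ε n * a ^ α / y ^ (2 * α) := by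
          gcongr
          exact le_max_left _ _
  · -- large regime: use h1
    have hlt : c < ε n * a ^ α₅ / y ^ (α₅ + α₆) := lt_of_not_ge hcase
    have h' : c * y ^ (α₅ + α₆) ≤ ε n * a ^ α₅ := by
      rw [lt_div_iff₀ (by positivity)] at hlt
      linarith
    have hpow := Real.rpow_le_rpow (by positivity) h' (by linarith : (0:ℝ) ≤ α₀ + 1)
    rw [Real.mul_rpow hc.le (by positivity), Real.mul_rpow hεn.le (by positivity),
      ← Real.rpow_mul hy.le, ← Real.rpow_mul ha.le] at hpow
    have e3 : ε n ^ (α₀ + 1) = ε n ^ α₀ * ε n := by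
      rw [Real.rpow_add hεn, Real.rpow_one]
    rw [e3] at hpow
    -- hpow : K * y ^ ((α₅+α₆)*(α₀+1)) ≤ ε n ^ α₀ * ε n * a ^ (α₅*(α₀+1))
    have hE : 0 < ε n ^ α₀ := Real.rpow_pos_of_pos hεn _
    have hinv : (1:ℝ) / ε n ^ α₀ ≤
        ε n / K * (a ^ (α₅ * (α₀ + 1)) / y ^ ((α₅ + α₆) * (α₀ + 1))) := by
      have hrw : ε n / K * (a ^ (α₅ * (α₀ + 1)) / y ^ ((α₅ + α₆) * (α₀ + 1)))
          = ε n * a ^ (α₅ * (α₀ + 1)) / (K * y ^ ((α₅ + α₆) * (α₀ + 1))) := by ring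
      rw [hrw, div_le_div_iff₀ hE (by positivity)]
      nlinarith [hpow]
    have key := aux_pow_cmp a y B α p q hy hya hyB hpα hqα
    have hsplit : a ^ α₁ / y ^ (α₁ + α₂)
        * (a ^ (α₅ * (α₀ + 1)) / y ^ ((α₅ + α₆) * (α₀ + 1)))
        = a ^ p / y ^ (p + q) := by
      rw [div_mul_div_comm, ← Real.rpow_add ha, ← Real.rpow_add hy]
      congr 1
      · congr 1; rw [hpdef]; ring
      · congr 1; rw [hpdef, hqdef]; ring
    calc ζ n z ≤ C₁ * a ^ α₁ / (ε n ^ α₀ * y ^ (α₁ + α₂)) := h1 n z hy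
      _ = C₁ * (a ^ α₁ / y ^ (α₁ + α₂)) * (1 / ε n ^ α₀) := by
          field_simp
      _ ≤ C₁ * (a ^ α₁ / y ^ (α₁ + α₂))
          * (ε n / K * (a ^ (α₅ * (α₀ + 1)) / y ^ ((α₅ + α₆) * (α₀ + 1)))) :=
          mul_le_mul_of_nonneg_left hinv (by positivity)
      _ = C₁ / K * ε n * (a ^ α₁ / y ^ (α₁ + α₂)
          * (a ^ (α₅ * (α₀ + 1)) / y ^ ((α₅ + α₆) * (α₀ + 1)))) := by ring
      _ = C₁ / K * ε n * (a ^ p / y ^ (p + q)) := by rw [hsplit]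
      _ ≤ C₁ / K * ε n * (B ^ (α - q) * a ^ α / y ^ (2 * α)) :=
          mul_le_mul_of_nonneg_left key (by positivity)
      _ = C₁ / K * B ^ (α - q) * ε n * a ^ α / y ^ (2 * α) := by ring
      _ ≤ max (C₂ * B ^ (α - α₄)) (C₁ / K * B ^ (α - q)) * ε n * a ^ α / y ^ (2 * α) := by
          gcongr
          exact le_max_right _ _
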